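/- In the weighted projective space setting with G = GL_{m+1}, λ = x₀, χ = (a₀,…,a_m) antidominant with all a_i > 0: for the element v_k ∈ W^P, Φ_{v_k}^P = {x₀ − x_k, x₁ − x_k, …, x_{k−1} − x_k} and gcd(a_{v_k}, a_{Φ_{v_k}^P}) = gcd(a₀, …, a_k). Hence q_{v_k} = gcd(a₀,…,a_k)/gcd(a₀,…,a_m). -/

import Mathlib

/-- The standard basis character `x_i` of the diagonal torus of `GL_{m+1}`. -/
def wpsX (m : ℕ) (i : Fin (m + 1)) : Fin (m + 1) → ℤ := Pi.single i 1

/-- The Weyl group `S_{m+1}` acts on characters by `σ·x_i = x_{σ(i)}`. -/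
def wpsAct (m : ℕ) (σ : Equiv.Perm (Fin (m + 1))) (μ : Fin (m + 1) → ℤ) :
    Fin (m + 1) → ℤ := μ ∘ σ.symm

/-- `Φ(𝔲⁻) = {x_i − x_0 : i ≠ 0}` for `λ = x_0`. -/
def wpsPhiU (m : ℕ) : Set (Fin (m + 1) → ℤ) :=
  {μ | ∃ i : Fin (m + 1), (i : ℕ) ≠ 0 ∧ μ = wpsX m i - wpsX m 0}

/-- `Φ⁺ = {x_i − x_j : i < j}`. -/
def wpsPhiPos (m : ℕ) : Set (Fin (m + 1) → ℤ) :=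
  {μ | ∃ i j : Fin (m + 1), (i : ℕ) < (j : ℕ) ∧ μ = wpsX m i - wpsX m j}

private lemma wps_finset_gcd_nonneg {α : Type*} (s : Finset α) (f : α → ℤ) :
    0 ≤ s.gcd f := by
  rw [← Finset.normalize_gcd, ← Int.abs_eq_normalize]; positivity

private lemma wps_gcd_nonneg (a b : ℤ) : 0 ≤ gcd a b := by
  rw [← Int.coe_gcd]; positivity

private lemma wpsX_comp (m : ℕ) (σ : Equiv.Perm (Fin (m + 1))) (i : Fin (m + 1)) :
    (wpsX m i) ∘ σ.symm = wpsX m (σ i) := by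
  funext j
  simp only [wpsX, Function.comp_apply, Pi.single_apply]
  by_cases h : j = σ i
  · simp [h]
  · rw [if_neg h, if_neg]
    rw [Equiv.symm_apply_eq]
    exact fun hc => h (by rw [hc])

private lemma wps_act_diff (m : ℕ) (σ : Equiv.Perm (Fin (m + 1))) (i j : Fin (m + 1)) :
    wpsAct m σ (wpsX m i - wpsX m j) = wpsX m (σ i) - wpsX m (σ j) := by
  funext c
  have h1 := congrFun (wpsX_comp m σ i) c
  have h2 := congrFun (wpsX_comp m σ j) c
  simp only [Function.comp_apply] at h1 h2
  simp only [wpsAct, Function.comp_apply, Pi.sub_apply, h1, h2]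

private lemma wps_diff_inj (m : ℕ) {a b c d : Fin (m + 1)} (hab : a ≠ b) (hcd : c ≠ d)
    (h : wpsX m a - wpsX m b = wpsX m c - wpsX m d) : a = c ∧ b = d := by
  have ha := congrFun h a
  have hb := congrFun h b
  simp only [wpsX, Pi.sub_apply, Pi.single_apply] at ha hb
  rw [if_pos trivial, if_neg hab] at ha
  rw [if_neg (fun hc : b = a => hab hc.symm), if_pos trivial] at hb
  have hac : a = c := by
    by_cases h1 : a = c
    · exact h1
    · exfalso; rw [if_neg h1] at ha; split_ifs at ha <;> omega
  have hbd : b = d := by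
    by_cases h1 : b = d
    · exact h1
    · exfalso; rw [if_neg h1] at hb; split_ifs at hb <;> omega
  exact ⟨hac, hbd⟩

private lemma wps_key (m k : ℕ) (hk : k < m + 1) (B : Fin (m + 1) → ℤ) :
    gcd (B ⟨k, hk⟩)
      ((Finset.univ.filter (fun i : Fin (m + 1) => (i : ℕ) < k)).gcd
        (fun i => B i - B ⟨k, hk⟩))
    = (Finset.univ.filter (fun i : Fin (m + 1) => (i : ℕ) ≤ k)).gcd B := by
  apply Int.dvd_antisymm (wps_gcd_nonneg _ _) (wps_finset_gcd_nonneg _ _)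
  · apply Finset.dvd_gcd
    intro i hi
    simp only [Finset.mem_filter, Finset.mem_univ, true_and] at hi
    rcases lt_or_eq_of_le hi with hlt | heq
    · have h1 : gcd (B ⟨k, hk⟩)
          ((Finset.univ.filter (fun i : Fin (m + 1) => (i : ℕ) < k)).gcd
            (fun i => B i - B ⟨k, hk⟩)) ∣ B i - B ⟨k, hk⟩ :=
        dvd_trans (gcd_dvd_right _ _)
          (Finset.gcd_dvd (by simp [Finset.mem_filter, hlt]))
      have h2 := gcd_dvd_left (B ⟨k, hk⟩)
          ((Finset.univ.filter (fun i : Fin (m + 1) => (i : ℕ) < k)).gcd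
            (fun i => B i - B ⟨k, hk⟩))
      have := dvd_add h1 h2
      simpa using this
    · have : i = ⟨k, hk⟩ := Fin.ext heq
      rw [this]
      exact gcd_dvd_left _ _
  · apply dvd_gcd
    · exact Finset.gcd_dvd (by simp [Finset.mem_filter])
    · apply Finset.dvd_gcd
      intro i hi
      simp only [Finset.mem_filter, Finset.mem_univ, true_and] at hi
      exact dvd_sub (Finset.gcd_dvd (by simp [Finset.mem_filter, le_of_lt hi]))
        (Finset.gcd_dvd (by simp [Finset.mem_filter]))

private lemma wps_part2 (m k : ℕ) (hk : k < m + 1) (A : Fin (m + 1) → ℤ)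
    (hApos : ∀ i, 0 < A i) :
    gcd (A ⟨k, hk⟩ / Finset.univ.gcd A)
        ((Finset.univ.filter (fun i : Fin (m + 1) => (i : ℕ) < k)).gcd
          (fun i => (A i - A ⟨k, hk⟩) / Finset.univ.gcd A))
      = (Finset.univ.filter (fun i : Fin (m + 1) => (i : ℕ) ≤ k)).gcd A
          / Finset.univ.gcd A := by
  set d := Finset.univ.gcd A with hd
  have hdvd : ∀ i, d ∣ A i := fun i => Finset.gcd_dvd (Finset.mem_univ i)
  have hd0 : d ≠ 0 := by
    intro h
    have := Finset.gcd_eq_zero_iff.mp (hd ▸ h) ⟨0, Nat.succ_pos m⟩ (Finset.mem_univ _)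
    exact (hApos _).ne' this
  have hdpos : 0 < d := lt_of_le_of_ne (wps_finset_gcd_nonneg _ _) (Ne.symm hd0)
  set B : Fin (m + 1) → ℤ := fun i => A i / d with hB
  have hAB : ∀ i, A i = d * B i := fun i => (Int.mul_ediv_cancel' (hdvd i)).symm
  have hsub : ∀ i : Fin (m + 1), (A i - A ⟨k, hk⟩) / d = B i - B ⟨k, hk⟩ :=
    fun i => Int.sub_ediv_of_dvd _ (hdvd _)
  calc gcd (A ⟨k, hk⟩ / d)
        ((Finset.univ.filter (fun i : Fin (m + 1) => (i : ℕ) < k)).gcd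
          (fun i => (A i - A ⟨k, hk⟩) / d))
      = gcd (B ⟨k, hk⟩)
        ((Finset.univ.filter (fun i : Fin (m + 1) => (i : ℕ) < k)).gcd
          (fun i => B i - B ⟨k, hk⟩)) := by
        congr 1
        exact Finset.gcd_congr rfl (fun i _ => hsub i)
    _ = (Finset.univ.filter (fun i : Fin (m + 1) => (i : ℕ) ≤ k)).gcd B :=
        wps_key m k hk B
    _ = (Finset.univ.filter (fun i : Fin (m + 1) => (i : ℕ) ≤ k)).gcd A / d := by
        conv_rhs => rw [show ((Finset.univ.filter (fun i : Fin (m + 1) => (i : ℕ) ≤ k)).gcd A)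
          = (Finset.univ.filter (fun i : Fin (m + 1) => (i : ℕ) ≤ k)).gcd (fun i => d * B i)
          from Finset.gcd_congr rfl (fun i _ => hAB i)]
        rw [Finset.gcd_mul_left, Int.normalize_of_nonneg (le_of_lt hdpos),
          Int.mul_ediv_cancel_left _ hd0]

/-- Weighted projective space setting, `G = GL_{m+1}`, `λ = x₀`,
`χ = (a₀,…,a_m)` antidominant with all `a_i > 0`.  For `v_k ∈ W^P` (one-line notation
`v_k = (k, m, m−1, …, k+1, k−1, …, 0)`):
(i) `Φ_{v_k}^P = Φ⁺ ∩ v_kΦ(𝔲⁻) = {x_i − x_k : 0 ≤ i ≤ k−1}`;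
(ii) `gcd(a_{v_k}, a_{Φ_{v_k}^P}) = gcd(a₀, …, a_k)` (in the normalization
`a_μ = ⟨μ,χ⟩/gcd(χ)`, so both sides are divided by `d = gcd(a₀,…,a_m)`);
(iii) hence `q_{v_k} = gcd(a_{v_k}, a_{Φ_{v_k}^P})/gcd(a_{w₀}, a_{Φ_{w₀}^P})
 = gcd(a₀,…,a_k)/gcd(a₀,…,a_m)`, where `w₀ = v_m`. -/
theorem stmt13 (m k : ℕ) (hk : k ≤ m) (A : Fin (m + 1) → ℤ)
    (hApos : ∀ i, 0 < A i)
    (hanti : ∀ i j : Fin (m + 1), i ≤ j → A i ≤ A j)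
    (vk : Equiv.Perm (Fin (m + 1)))
    (hvk : ∀ j : Fin (m + 1), (vk j : ℕ) =
      if (j : ℕ) = 0 then k
      else if (j : ℕ) ≤ m - k then m + 1 - (j : ℕ) else m - (j : ℕ)) :
    -- (i)
    (wpsPhiPos m ∩ (wpsAct m vk '' wpsPhiU m)
      = {μ | ∃ i : Fin (m + 1), (i : ℕ) < k
          ∧ μ = wpsX m i - wpsX m ⟨k, Nat.lt_succ_of_le hk⟩})
    ∧
    -- (ii)
    (gcd (A ⟨k, Nat.lt_succ_of_le hk⟩ / Finset.univ.gcd A)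
        ((Finset.univ.filter (fun i : Fin (m + 1) => (i : ℕ) < k)).gcd
          (fun i => (A i - A ⟨k, Nat.lt_succ_of_le hk⟩) / Finset.univ.gcd A))
      = (Finset.univ.filter (fun i : Fin (m + 1) => (i : ℕ) ≤ k)).gcd A
          / Finset.univ.gcd A)
    ∧
    -- (iii)
    ((gcd (A ⟨k, Nat.lt_succ_of_le hk⟩ / Finset.univ.gcd A)
        ((Finset.univ.filter (fun i : Fin (m + 1) => (i : ℕ) < k)).gcd
          (fun i => (A i - A ⟨k, Nat.lt_succ_of_le hk⟩) / Finset.univ.gcd A)))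
      / (gcd (A (Fin.last m) / Finset.univ.gcd A)
        ((Finset.univ.filter (fun i : Fin (m + 1) => (i : ℕ) < m)).gcd
          (fun i => (A i - A (Fin.last m)) / Finset.univ.gcd A)))
      = (Finset.univ.filter (fun i : Fin (m + 1) => (i : ℕ) ≤ k)).gcd A
          / Finset.univ.gcd A) := by
  have hkf : k < m + 1 := Nat.lt_succ_of_le hk
  set kf : Fin (m + 1) := ⟨k, hkf⟩ with hkfdef
  have h0k : vk 0 = kf := by
    apply Fin.ext
    have := hvk 0
    simpa using this
  refine ⟨?_, ?_, ?_⟩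
  · -- (i)
    ext μ
    constructor
    · rintro ⟨⟨a, b, hab, rfl⟩, ν, ⟨i, hi0, rfl⟩, hμ⟩
      rw [wps_act_diff] at hμ
      have hiz : i ≠ 0 := fun h => hi0 (by simp [h])
      have hne1 : vk i ≠ vk 0 := fun h => hiz (vk.injective h)
      have hne2 : a ≠ b := fun h => absurd (congrArg Fin.val h) (Nat.ne_of_lt hab)
      obtain ⟨hia, hib⟩ := wps_diff_inj m hne1 hne2 hμ
      refine ⟨a, ?_, ?_⟩
      · have : (vk 0 : ℕ) = k := congrArg Fin.val h0k
        rw [← hib] at hab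
        rwa [this] at hab
      · rw [← h0k, hib]
    · rintro ⟨i, hik, rfl⟩
      refine ⟨⟨i, kf, by exact hik, rfl⟩, ?_⟩
      refine ⟨wpsX m (vk.symm i) - wpsX m 0, ⟨vk.symm i, ?_, rfl⟩, ?_⟩
      · intro h
        have : vk.symm i = 0 := Fin.ext (by simpa using h)
        have : i = vk 0 := by rw [← this, Equiv.apply_symm_apply]
        rw [h0k] at this
        have := congrArg Fin.val this
        simp only [hkfdef] at this
        omega
      · rw [wps_act_diff, Equiv.apply_symm_apply, h0k]
  · exact wps_part2 m k hkf A hApos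
  · have hlast : (Fin.last m) = ⟨m, Nat.lt_succ_of_le (le_refl m)⟩ := rfl
    have h2k := wps_part2 m k hkf A hApos
    have h2m := wps_part2 m m (Nat.lt_succ_of_le (le_refl m)) A hApos
    rw [h2k]
    have hfull : (Finset.univ.filter (fun i : Fin (m + 1) => (i : ℕ) ≤ m)) =
        (Finset.univ : Finset (Fin (m + 1))) := by
      apply Finset.filter_true_of_mem
      intro i _
      exact Nat.lt_succ_iff.mp i.isLt
    have hd0 : Finset.univ.gcd A ≠ 0 := by
      intro h
      have := Finset.gcd_eq_zero_iff.mp h ⟨0, Nat.succ_pos m⟩ (Finset.mem_univ _)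
      exact (hApos _).ne' this
    have hden : gcd (A (Fin.last m) / Finset.univ.gcd A)
        ((Finset.univ.filter (fun i : Fin (m + 1) => (i : ℕ) < m)).gcd
          (fun i => (A i - A (Fin.last m)) / Finset.univ.gcd A)) = 1 := by
      rw [hlast] at *
      rw [h2m, hfull, Int.ediv_self hd0]
    rw [hden, Int.ediv_one]
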